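/- For any complex abelian variety A, the reduced degree of End_Q(A) satisfies [End_Q(A) : Q]_red ≤ 2·dim_C A. -/

import Mathlib

set_option linter.unusedSectionVars false
set_option maxHeartbeats 1000000

open Module

section Core

variable {E : Type} [CommRing E] [Algebra ℚ E]
variable {M : Type} [AddCommGroup M] [Module ℚ M]
variable (φ : E →+* Module.End ℚ M)

/-- The submodule of `M` killed by the ideal `I` under the action `φ`. -/
def killedBy (I : Ideal E) : Submodule ℚ M where
  carrier := {m | ∀ x ∈ I, φ x m = 0}
  add_mem' := by intro a b ha hb x hx; rw [map_add, ha x hx, hb x hx, add_zero]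
  zero_mem' := by intro x hx; rw [map_zero]
  smul_mem' := by intro q m hm x hx; rw [map_smul, hm x hx, smul_zero]

lemma killedBy_stable (I : Ideal E) (x : E) : ∀ m ∈ killedBy φ I, φ x m ∈ killedBy φ I := by
  intro m hm y hy
  have h : φ y (φ x m) = φ x (φ y m) := by
    rw [← Module.End.mul_apply, ← map_mul, mul_comm, map_mul, Module.End.mul_apply]
  rw [h, hm y hy, map_zero]

/-- The action of `E` on `killedBy φ I`. -/
def resHom (I : Ideal E) : E →+* Module.End ℚ (killedBy φ I) where
  toFun x := (φ x).restrict (p := killedBy φ I) (q := killedBy φ I) (killedBy_stable φ I x)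
  map_one' := by ext m; simp [LinearMap.restrict_apply]
  map_mul' x y := by
    ext m; simp [LinearMap.restrict_apply, map_mul, Module.End.mul_apply]
  map_zero' := by ext m; simp [LinearMap.restrict_apply]
  map_add' x y := by ext m; simp [LinearMap.restrict_apply, map_add, LinearMap.add_apply]

lemma resHom_apply (I : Ideal E) (x : E) (m : killedBy φ I) :
    (resHom φ I x m : M) = φ x m := rfl

/-- The action descends to the quotient. -/
noncomputable def quotAction (I : Ideal E) : (E ⧸ I) →+* Module.End ℚ (killedBy φ I) :=
  Ideal.Quotient.lift I (resHom φ I) (fun x hx => by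
    ext m
    exact m.2 x hx)

/-- If `I` is maximal and `killedBy φ I` is nonzero, then the degree of the residue field
is at most the dimension of `killedBy φ I`. -/
lemma finrank_quot_le_killedBy [FiniteDimensional ℚ M] (I : Ideal E) [I.IsMaximal]
    (hne : killedBy φ I ≠ ⊥) :
    finrank ℚ (E ⧸ I) ≤ finrank ℚ (killedBy φ I) := by
  letI : Field (E ⧸ I) := Ideal.Quotient.field I
  letI : Module (E ⧸ I) (killedBy φ I) := Module.compHom _ (quotAction φ I)
  haveI : IsScalarTower ℚ (E ⧸ I) (killedBy φ I) := by
    refine ⟨fun q k m => ?_⟩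
    obtain ⟨x, rfl⟩ := Ideal.Quotient.mk_surjective k
    apply Subtype.ext
    have h2 : q • Ideal.Quotient.mk I x = Ideal.Quotient.mk I (q • x) :=
      (map_rat_smul (Ideal.Quotient.mk I) q x).symm
    rw [h2]
    show (φ (q • x)) m.1 = ((q • (resHom φ I x m) : killedBy φ I) : M)
    rw [SetLike.val_smul, map_rat_smul φ q x, LinearMap.smul_apply]
    rfl
  haveI : Module.Finite (E ⧸ I) (killedBy φ I) :=
    Module.Finite.of_restrictScalars_finite ℚ _ _
  haveI : Nontrivial (killedBy φ I) := Submodule.nontrivial_iff_ne_bot.mpr hne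
  have hpos : 0 < finrank (E ⧸ I) (killedBy φ I) := finrank_pos
  calc finrank ℚ (E ⧸ I)
      ≤ finrank ℚ (E ⧸ I) * finrank (E ⧸ I) (killedBy φ I) :=
        Nat.le_mul_of_pos_right _ hpos
    _ = finrank ℚ (killedBy φ I) := Module.finrank_mul_finrank ℚ (E ⧸ I) (killedBy φ I)

end Core

/-- Sum of dimensions of an independent family of submodules is at most the total dimension. -/
lemma sum_finrank_le_of_iSupIndep {M : Type} [AddCommGroup M] [Module ℚ M]
    [FiniteDimensional ℚ M] {ι : Type} [Fintype ι] (p : ι → Submodule ℚ M)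
    (hp : iSupIndep p) : ∑ i, finrank ℚ (p i) ≤ finrank ℚ M := by
  classical
  have key : ∀ s : Finset ι, ∑ i ∈ s, finrank ℚ (p i) ≤ finrank ℚ ↥(s.sup p) := by
    intro s
    induction s using Finset.induction with
    | empty => simp
    | @insert i s his ih =>
      rw [Finset.sum_insert his, Finset.sup_insert]
      have hdisj : Disjoint (p i) (s.sup p) := by
        refine (hp i).mono_right ?_
        refine Finset.sup_le fun j hj => ?_
        exact le_iSup₂ (f := fun j (_ : j ≠ i) => p j) j (fun h => his (h ▸ hj))
      have heq := Submodule.finrank_sup_add_finrank_inf_eq (p i) (s.sup p)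
      rw [disjoint_iff.mp hdisj, finrank_bot, add_zero] at heq
      rw [heq]
      exact Nat.add_le_add_left ih _
  calc ∑ i, finrank ℚ (p i) ≤ finrank ℚ ↥((Finset.univ : Finset ι).sup p) := key _
    _ ≤ finrank ℚ M := Submodule.finrank_le _

/-- Core algebraic fact: a commutative reduced finite-dimensional `ℚ`-algebra acting
faithfully on a finite-dimensional `ℚ`-vector space has dimension at most that of the space. -/
theorem finrank_le_of_reduced_faithful
    (E : Type) [CommRing E] [Algebra ℚ E] [FiniteDimensional ℚ E] [IsReduced E]
    (M : Type) [AddCommGroup M] [Module ℚ M] [FiniteDimensional ℚ M]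
    (φ : E →+* Module.End ℚ M) (hφ : Function.Injective φ) :
    finrank ℚ E ≤ finrank ℚ M := by
  classical
  haveI : IsArtinianRing E := isArtinian_of_tower ℚ inferInstance
  haveI : Finite (MaximalSpectrum E) := inferInstance
  haveI : Fintype (MaximalSpectrum E) := Fintype.ofFinite _
  let e := IsArtinianRing.equivPi E
  have hcomp : ∀ (x : E) (I : MaximalSpectrum E),
      e x I = Ideal.Quotient.mk I.1 x := fun _ _ => rfl
  let u : MaximalSpectrum E → E := fun I => e.symm (Pi.single I 1)
  have hu : ∀ I, e (u I) = Pi.single I 1 := fun I => e.apply_symm_apply _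
  -- x ∈ I implies x * u I = 0
  have hmul : ∀ (I) (x : E), x ∈ I.1 → x * u I = 0 := by
    intro I x hx
    apply e.injective
    rw [map_mul, hu I, map_zero]
    funext J
    rw [Pi.mul_apply, Pi.zero_apply]
    rcases eq_or_ne J I with rfl | hJ
    · rw [Pi.single_eq_same, mul_one]
      exact Ideal.Quotient.eq_zero_iff_mem.mpr hx
    · rw [Pi.single_eq_of_ne hJ, mul_zero]
  -- u I ≡ 1 mod I
  have hsub : ∀ I, u I - 1 ∈ I.1 := by
    intro I
    have h1 : Ideal.Quotient.mk I.1 (u I) = 1 := by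
      have h := congrFun (hu I) I
      rwa [Pi.single_eq_same] at h
    apply Ideal.Quotient.eq_zero_iff_mem.mp
    rw [map_sub, h1, map_one, sub_self]
  -- u I ∈ J for J ≠ I
  have hmem : ∀ I J, J ≠ I → u I ∈ J.1 := by
    intro I J hJ
    apply Ideal.Quotient.eq_zero_iff_mem.mp
    have h := congrFun (hu I) J
    rwa [Pi.single_eq_of_ne hJ] at h
  -- each killedBy is nonzero
  have hne : ∀ I : MaximalSpectrum E, killedBy φ I.1 ≠ ⊥ := by
    intro I hbot
    haveI : I.1.IsMaximal := I.2
    letI : Field (E ⧸ I.1) := Ideal.Quotient.field I.1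
    have hu0 : u I ≠ 0 := by
      intro h0
      have h : (0 : ∀ J : MaximalSpectrum E, E ⧸ J.1) = Pi.single I 1 := by
        rw [← map_zero e, ← h0, hu I]
      have h1 := congrFun h I
      rw [Pi.zero_apply, Pi.single_eq_same] at h1
      exact zero_ne_one h1
    have hφu : φ (u I) ≠ 0 := fun h => hu0 (hφ (by rw [h, map_zero]))
    obtain ⟨m, hm⟩ : ∃ m, φ (u I) m ≠ 0 := by
      by_contra h
      push_neg at h
      exact hφu (LinearMap.ext fun m => h m)
    apply hm
    have hmem' : φ (u I) m ∈ killedBy φ I.1 := by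
      intro x hx
      rw [← Module.End.mul_apply, ← map_mul, hmul I x hx, map_zero, LinearMap.zero_apply]
    rw [hbot, Submodule.mem_bot] at hmem'
    exact hmem'
  -- independence
  have hind : iSupIndep (fun I : MaximalSpectrum E => killedBy φ I.1) := by
    intro I
    rw [Submodule.disjoint_def]
    intro m hmI hmSup
    have h1 : φ (u I) m = m := by
      have h := hmI (u I - 1) (hsub I)
      rw [map_sub, LinearMap.sub_apply, map_one, Module.End.one_apply, sub_eq_zero] at h
      exact h
    have h2 : φ (u I) m = 0 := by
      have hle : (⨆ J, ⨆ _ : J ≠ I, killedBy φ J.1) ≤ LinearMap.ker (φ (u I)) := by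
        refine iSup_le fun J => iSup_le fun hJ => ?_
        intro m' hm'
        exact LinearMap.mem_ker.mpr (hm' (u I) (hmem I J hJ))
      exact LinearMap.mem_ker.mp (hle hmSup)
    rw [h1] at h2
    exact h2
  -- assemble
  have hperI : ∀ I : MaximalSpectrum E,
      finrank ℚ (E ⧸ I.1) ≤ finrank ℚ (killedBy φ I.1) := by
    intro I
    haveI : I.1.IsMaximal := I.2
    exact finrank_quot_le_killedBy φ I.1 (hne I)
  have heq : finrank ℚ E = ∑ I : MaximalSpectrum E, finrank ℚ (E ⧸ I.1) := by
    let eL : E ≃ₗ[ℚ] ∀ I : MaximalSpectrum E, E ⧸ I.1 :=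
      { e with map_smul' := fun q x => map_rat_smul e q x }
    rw [eL.finrank_eq, Module.finrank_pi_fintype]
  rw [heq]
  exact le_trans (Finset.sum_le_sum fun I _ => hperI I)
    (sum_finrank_le_of_iSupIndep _ hind)



/-- A complex abelian variety, modeled as a complex torus `V/L`: a
finite-dimensional complex vector space `V` together with a full lattice `L`
(a discrete cocompact subgroup, i.e. a free `ℤ`-submodule of rank `2 dim V`
spanning `V` over `ℝ`).  The polarization plays no role in the statements
below and is not recorded. -/
structure CAbVar where
  V : Type
  [grp : AddCommGroup V]
  [modR : Module ℝ V]
  [modC : Module ℂ V]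
  [tower : IsScalarTower ℝ ℂ V]
  [findim : FiniteDimensional ℂ V]
  L : Submodule ℤ V
  spans : Submodule.span ℝ (L : Set V) = ⊤
  free : Module.Free ℤ L
  rank_eq : Module.finrank ℤ L = 2 * Module.finrank ℂ V

attribute [instance] CAbVar.grp CAbVar.modR CAbVar.modC CAbVar.tower CAbVar.findim

namespace CAbVar

/-- The (complex) dimension of the abelian variety. -/
noncomputable def dim (A : CAbVar) : ℕ := Module.finrank ℂ A.V

/-- `f` belongs to `End_ℚ(A) = End(A) ⊗ ℚ`: some positive integer multiple of
`f` is an endomorphism of `A`, i.e. preserves the lattice. -/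
def IsEndQ (A : CAbVar) (f : Module.End ℂ A.V) : Prop :=
  ∃ n : ℕ, 0 < n ∧ ∀ v ∈ A.L, (n • f) v ∈ A.L

/-- A complex subtorus (equivalently, for an abelian variety, an abelian
subvariety): a complex subspace meeting the lattice in a full lattice of the
subspace. -/
def IsSubtorus (A : CAbVar) (W : Submodule ℂ A.V) : Prop :=
  Submodule.span ℝ ((W : Set A.V) ∩ (A.L : Set A.V)) = W.restrictScalars ℝ

/-- A simple abelian variety: nonzero, and with no nontrivial abelian
subvariety. -/
def Simple (A : CAbVar) : Prop :=
  0 < A.dim ∧ ∀ W : Submodule ℂ A.V, IsSubtorus A W → W = ⊥ ∨ W = ⊤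

/-- `A` is isotypic: isogenous to a power `B^n` of a simple abelian variety
`B` (an isogeny of complex tori is a complex linear isomorphism of universal
covers carrying one lattice into the other). -/
def Isotypic (A : CAbVar) : Prop :=
  ∃ B : CAbVar, Simple B ∧ ∃ n : ℕ, 0 < n ∧
    ∃ f : A.V ≃ₗ[ℂ] (Fin n → B.V),
      ∀ v ∈ A.L, ∀ i : Fin n, f v i ∈ B.L

end CAbVar

/-- A finite-dimensional commutative `ℚ`-subalgebra of `End_ℚ(A)`, presented
abstractly.  It is étale iff `E` is moreover reduced. -/
structure QSubalg (A : CAbVar) where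
  E : Type
  [ring : CommRing E]
  [alg : Algebra ℚ E]
  [findim : FiniteDimensional ℚ E]
  ψ : E →+* Module.End ℂ A.V
  inj : Function.Injective ψ
  mem : ∀ x : E, A.IsEndQ (ψ x)

attribute [instance] QSubalg.ring QSubalg.alg QSubalg.findim

/-- For any complex abelian variety `A`, the reduced degree
of `End_ℚ(A)` satisfies `[End_ℚ(A) : ℚ]_red ≤ 2 dim_ℂ A`.  (The reduced
degree equals the `ℚ`-degree of a maximal étale subalgebra of `End_ℚ(A)`; the
statement is that every étale — i.e. commutative reduced — `ℚ`-subalgebra of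
`End_ℚ(A)` has degree at most `2 dim_ℂ A`.) -/
theorem reduced_degree_le_twice_dim
    (A : CAbVar) (S : QSubalg A) (hetale : IsReduced S.E) :
    Module.finrank ℚ S.E ≤ 2 * A.dim := by
  classical
  by_cases hd : finrank ℂ A.V = 0
  · haveI : Subsingleton A.V := Module.finrank_zero_iff.mp hd
    haveI : Subsingleton S.E := ⟨fun a b => S.inj (Subsingleton.elim _ _)⟩
    rw [Module.finrank_zero_of_subsingleton]
    exact Nat.zero_le _
  · -- rational structure
    letI : Module ℚ A.V := Module.compHom A.V (algebraMap ℚ ℝ)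
    haveI hQR : IsScalarTower ℚ ℝ A.V := ⟨fun q r v => by
      show (q • r) • v = (algebraMap ℚ ℝ q) • (r • v)
      rw [Algebra.smul_def q r, mul_smul]⟩
    haveI hQC : IsScalarTower ℚ ℂ A.V := ⟨fun q c v => by
      show (q • c) • v = (algebraMap ℚ ℝ q) • (c • v)
      rw [Algebra.smul_def q c, IsScalarTower.algebraMap_apply ℚ ℝ ℂ, mul_smul,
        algebraMap_smul]⟩
    set M : Submodule ℚ A.V := Submodule.span ℚ (A.L : Set A.V) with hMdef
    -- the lattice basis
    haveI := A.free
    set κ := Module.Free.ChooseBasisIndex ℤ A.L with hκ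
    let b : Basis κ ℤ A.L := Module.Free.chooseBasis ℤ A.L
    haveI hfin : Finite κ := by
      by_contra hinf
      haveI : Infinite κ := not_finite_iff_infinite.mp hinf
      have hr : Module.rank ℤ A.L = Cardinal.mk κ := b.mk_eq_rank''.symm
      have : finrank ℤ A.L = 0 := by
        rw [finrank, hr, Cardinal.toNat_apply_of_aleph0_le (Cardinal.aleph0_le_mk κ)]
      rw [A.rank_eq] at this
      omega
    haveI : Fintype κ := Fintype.ofFinite κ
    let w : κ → A.V := fun i => (b i : A.V)
    -- w is ℤ-linearly independent in V
    have hliZ : LinearIndependent ℤ w := by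
      have h := b.linearIndependent
      have h2 := h.map' A.L.subtype A.L.ker_subtype
      exact h2
    have hliQ : LinearIndependent ℚ w := (LinearIndependent.iff_fractionRing ℤ ℚ).mp hliZ
    -- span of w over ℤ is L
    have hspanZ : Submodule.span ℤ (Set.range w) = A.L := by
      have : Set.range w = A.L.subtype '' Set.range b := by
        rw [← Set.range_comp]; rfl
      rw [this, ← Submodule.map_span, b.span_eq, Submodule.map_subtype_top]
    have hspanQ : M = Submodule.span ℚ (Set.range w) := by
      rw [hMdef, ← hspanZ]
      exact Submodule.span_span_of_tower ℤ ℚ (Set.range w)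
    -- M is finite-dimensional of dimension 2 dim
    let bM : Basis κ ℚ (Submodule.span ℚ (Set.range w)) := Module.Basis.span hliQ
    haveI hMfd : FiniteDimensional ℚ (Submodule.span ℚ (Set.range w)) :=
      Module.Finite.of_basis bM
    have hMrank : finrank ℚ (Submodule.span ℚ (Set.range w)) = 2 * A.dim := by
      rw [finrank_eq_card_basis bM, ← finrank_eq_card_basis b, A.rank_eq]; rfl
    haveI hMfd' : FiniteDimensional ℚ M := by rw [hspanQ]; exact hMfd
    have hMrank' : finrank ℚ M = 2 * A.dim := by rw [hspanQ]; exact hMrank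
    -- ψ x preserves M
    have hL : ∀ (x : S.E), ∀ v ∈ A.L, S.ψ x v ∈ M := by
      intro x v hv
      obtain ⟨n, hn, hmem⟩ := S.mem x
      have h1 : (n • S.ψ x) v ∈ A.L := hmem v hv
      have h2 : S.ψ x v = ((n : ℚ)⁻¹ • ((n • S.ψ x) v) : A.V) := by
        rw [LinearMap.smul_apply, ← Nat.cast_smul_eq_nsmul ℚ n (S.ψ x v), smul_smul,
          inv_mul_cancel₀ (by exact_mod_cast hn.ne'), one_smul]
      rw [h2]
      exact Submodule.smul_mem _ _ (Submodule.subset_span h1)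
    have hM : ∀ x : S.E, ∀ v ∈ M, ((S.ψ x).restrictScalars ℚ) v ∈ M := by
      intro x v hv
      have hle : Submodule.map ((S.ψ x).restrictScalars ℚ) M ≤ M := by
        rw [hMdef, Submodule.map_span, Submodule.span_le]
        rintro _ ⟨u, hu, rfl⟩
        exact hL x u hu
      exact hle ⟨v, hv, rfl⟩
    -- the action of S.E on M
    let φ : S.E →+* Module.End ℚ M :=
      { toFun := fun x => ((S.ψ x).restrictScalars ℚ).restrict (p := M) (q := M) (hM x)
        map_one' := by
          ext m
          simp [LinearMap.restrict_apply]
        map_mul' := fun x y => by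
          ext m
          simp [LinearMap.restrict_apply, map_mul, Module.End.mul_apply]
        map_zero' := by
          ext m
          simp [LinearMap.restrict_apply]
        map_add' := fun x y => by
          ext m
          simp [LinearMap.restrict_apply, map_add, LinearMap.add_apply] }
    have hφ : Function.Injective φ := by
      rw [injective_iff_map_eq_zero]
      intro x hx
      apply (injective_iff_map_eq_zero S.ψ).mp S.inj x
      have hker : Submodule.span ℝ (A.L : Set A.V) ≤
          LinearMap.ker ((S.ψ x).restrictScalars ℝ) := by
        rw [Submodule.span_le]
        intro v hv
        have h := congrArg Subtype.val (LinearMap.ext_iff.mp hx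
          ⟨v, Submodule.subset_span hv⟩)
        exact LinearMap.mem_ker.mpr h
      rw [A.spans] at hker
      have h0 : (S.ψ x).restrictScalars ℝ = 0 :=
        LinearMap.ker_eq_top.mp (top_le_iff.mp hker)
      exact LinearMap.ext fun v => LinearMap.ext_iff.mp h0 v
    have := finrank_le_of_reduced_faithful S.E M φ hφ
    rw [hMrank'] at this
    exact this
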